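/- Laplace transform of the ABC derivative: for differentiable Laplace-transformable f with f' ∈ L¹ and 0 < α < 1, L[^{ABC}D^α_{0+} f](s) = (B(α)/(1-α)) · s^{α-1}/(s^α + α/(1-α)) · (s L[f](s) - f(0)) for s real with s^α > α/(1-α). -/

import Mathlib

open Real MeasureTheory Filter
open Set
open scoped ENNReal

/-- Mittag-Leffler function `E_α(z) = Σ z^n / Γ(αn+1)`. -/
noncomputable def mittagLeffler (α z : ℝ) : ℝ :=
  ∑' n : ℕ, z ^ n / Real.Gamma (α * n + 1)

/-- Riemann–Liouville fractional integral of order `β ≥ 0` with base point `a`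
(the identity for `β = 0`). -/
noncomputable def RL (a β : ℝ) (f : ℝ → ℝ) (t : ℝ) : ℝ :=
  if β = 0 then f t
  else (1 / Real.Gamma β) * ∫ τ in a..t, (t - τ) ^ (β - 1) * f τ

/-- ABR (Atangana–Baleanu, Riemann–Liouville type) fractional derivative,
with normalisation value `B = B(α)`. -/
noncomputable def ABR (B a α : ℝ) (f : ℝ → ℝ) (t : ℝ) : ℝ :=
  (B / (1 - α)) *
    deriv (fun s => ∫ x in a..s, f x * mittagLeffler α (-α / (1 - α) * (s - x) ^ α)) t

/-- ABC (Atangana–Baleanu, Caputo type) fractional derivative. -/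
noncomputable def ABC (B a α : ℝ) (f : ℝ → ℝ) (t : ℝ) : ℝ :=
  (B / (1 - α)) *
    ∫ x in a..t, deriv f x * mittagLeffler α (-α / (1 - α) * (t - x) ^ α)

/-- AB fractional integral. -/
noncomputable def ABI (B a α : ℝ) (f : ℝ → ℝ) (t : ℝ) : ℝ :=
  ((1 - α) / B) * f t + (α / B) * RL a α f t

/-- Laplace transform (for real `s`). -/
noncomputable def laplace (f : ℝ → ℝ) (s : ℝ) : ℝ :=
  ∫ t in Set.Ioi (0 : ℝ), Real.exp (-s * t) * f t



/-- Crude lower bound for the Gamma function. -/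
lemma gamma_lower (x A : ℝ) (hx : 1 ≤ x) (hA : 1 ≤ A) :
    A ^ (x - 1) * Real.exp (-A) ≤ Real.Gamma x := by
  have hx0 : (0:ℝ) < x := lt_of_lt_of_le one_pos hx
  rw [Real.Gamma_eq_integral hx0]
  have hint : IntegrableOn (fun t : ℝ => Real.exp (-t) * t ^ (x - 1)) (Ioi 0) :=
    Real.GammaIntegral_convergent hx0
  have h1 : A ^ (x - 1) * Real.exp (-A)
      ≤ ∫ t in Ioi A, Real.exp (-t) * t ^ (x - 1) := by
    have heq : ∫ t in Ioi A, A ^ (x-1) * Real.exp (-t)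
        = A ^ (x - 1) * Real.exp (-A) := by
      rw [MeasureTheory.integral_const_mul, integral_exp_neg_Ioi]
    rw [← heq]
    apply setIntegral_mono_on
    · exact ((exp_neg_integrableOn_Ioi A one_pos).congr_fun
        (fun t _ => by rw [neg_one_mul]) measurableSet_Ioi).const_mul _
    · exact hint.mono_set (fun t ht => lt_trans (lt_of_lt_of_le one_pos hA) ht)
    · exact measurableSet_Ioi
    · intro t ht
      rw [mul_comm (Real.exp (-t))]
      apply mul_le_mul_of_nonneg_right _ (Real.exp_nonneg _)
      exact Real.rpow_le_rpow (le_trans zero_le_one hA) (le_of_lt ht) (by linarith)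
  refine le_trans h1 (setIntegral_mono_set hint ?_ ?_)
  · filter_upwards [self_mem_ae_restrict measurableSet_Ioi] with t ht
    rw [mem_Ioi] at ht
    positivity
  · exact HasSubset.Subset.eventuallyLE (Ioi_subset_Ioi (by linarith))

set_option maxHeartbeats 1000000 in
/-- Summability of the Mittag-Leffler type series. -/
lemma summable_ml (α r : ℝ) (hα : 0 < α) (hr : 0 ≤ r) :
    Summable (fun n : ℕ => r ^ n / Real.Gamma (α * n + 1)) := by
  set A : ℝ := max 1 ((2*r+1) ^ (1/α)) with hAdef
  have hA1 : 1 ≤ A := le_max_left _ _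
  have hA0 : 0 < A := lt_of_lt_of_le one_pos hA1
  have hAα : 2*r+1 ≤ A ^ α := by
    calc 2*r+1 = ((2*r+1) ^ (1/α)) ^ α := by
          rw [← Real.rpow_mul (by linarith), one_div, inv_mul_cancel₀ hα.ne', Real.rpow_one]
      _ ≤ A ^ α := Real.rpow_le_rpow (Real.rpow_nonneg (by linarith) _)
          (le_max_right _ _) hα.le
  have hApos : (0:ℝ) < A ^ α := Real.rpow_pos_of_pos hA0 _
  have hrA : r ≤ 1/2 * A ^ α := by nlinarith
  refine Summable.of_nonneg_of_le (fun n => by positivity) (fun n => ?_)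
    ((summable_geometric_of_lt_one (r := (1/2:ℝ)) (by norm_num) (by norm_num)).mul_left (Real.exp A))
  · 
    have hxge : 1 ≤ α * (n:ℝ) + 1 := by nlinarith [mul_nonneg hα.le (Nat.cast_nonneg n)]
    have hgb := gamma_lower (α * n + 1) A hxge hA1
    have hApow : A ^ (α * n + 1 - 1) = (A ^ α) ^ n := by
      rw [add_sub_cancel_right, ← Real.rpow_natCast (A ^ α) n, ← Real.rpow_mul hA0.le]
    have hγpos : 0 < Real.Gamma (α * n + 1) := Real.Gamma_pos_of_pos (by positivity)
    rw [div_le_iff₀ hγpos]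
    have h2 : (A ^ α) ^ n * Real.exp (-A) ≤ Real.Gamma (α * n + 1) := by
      rw [← hApow]; exact hgb
    have h3 : r ^ n ≤ (1/2)^n * (A^α)^n := by
      rw [← mul_pow]
      exact pow_le_pow_left₀ hr hrA n
    calc r ^ n ≤ (1/2)^n * (A^α)^n := h3
      _ ≤ (1/2)^n * (Real.Gamma (α*n+1) * Real.exp A) := by
          apply mul_le_mul_of_nonneg_left _ (by positivity)
          calc (A^α)^n = ((A^α)^n * Real.exp (-A)) * Real.exp A := by
                rw [mul_assoc, ← Real.exp_add]; simp
            _ ≤ Real.Gamma (α*n+1) * Real.exp A :=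
                mul_le_mul_of_nonneg_right h2 (Real.exp_nonneg A)
      _ = Real.exp A * (1/2)^n * Real.Gamma (α*n+1) := by ring

/-- Laplace transform of `u ^ β`. -/
lemma laplace_rpow {s β : ℝ} (hs : 0 < s) (hβ : 0 ≤ β) :
    ∫ u in Ioi (0:ℝ), Real.exp (-s*u) * u ^ β = Real.Gamma (β+1) / s ^ (β+1) := by
  have h := Real.integral_rpow_mul_exp_neg_mul_Ioi (a := β + 1) (r := s) (by linarith) hs
  rw [show β + 1 - 1 = β by ring] at h
  calc ∫ u in Ioi (0:ℝ), Real.exp (-s*u) * u ^ β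
      = ∫ u in Ioi (0:ℝ), u ^ β * Real.exp (-(s*u)) := by
        apply setIntegral_congr_fun measurableSet_Ioi
        intro u _; dsimp only; rw [neg_mul, mul_comm]
    _ = (1/s) ^ (β+1) * Real.Gamma (β+1) := h
    _ = Real.Gamma (β+1) / s ^ (β+1) := by
        rw [one_div, Real.inv_rpow hs.le]
        field_simp

/-- Integrability of `exp(-su) * u^β` on `Ioi 0`. -/
lemma integrable_laplace_rpow {s β : ℝ} (hs : 0 < s) (hβ : 0 ≤ β) :
    IntegrableOn (fun u => Real.exp (-s*u) * u ^ β) (Ioi (0:ℝ)) := by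
  have h := integrableOn_rpow_mul_exp_neg_mul_rpow (s := β) (p := 1) (b := s)
    (by linarith) one_pos hs
  apply h.congr_fun _ measurableSet_Ioi
  intro u hu
  rw [mem_Ioi] at hu
  dsimp only
  rw [Real.rpow_one, mul_comm]



set_option maxHeartbeats 2000000 in
/-- Fubini for the Laplace transform of a causal convolution. -/
lemma conv_laplace {s : ℝ} (hs : 0 < s) (g k : ℝ → ℝ) (hgm : Measurable g)
    (hgi : IntegrableOn g (Ioi (0:ℝ))) (hkm : Measurable k)
    (hk0 : ∀ u : ℝ, 0 ≤ u → 0 ≤ k u)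
    (hki : IntegrableOn (fun u => Real.exp (-s*u) * k u) (Ioi (0:ℝ))) :
    IntegrableOn (fun t => Real.exp (-s*t) * ∫ x in (0:ℝ)..t, g x * k (t-x)) (Ioi (0:ℝ)) ∧
    ∫ t in Ioi (0:ℝ), Real.exp (-s*t) * ∫ x in (0:ℝ)..t, g x * k (t-x)
      = (∫ u in Ioi (0:ℝ), Real.exp (-s*u) * k u) * ∫ x in Ioi (0:ℝ), Real.exp (-s*x) * g x := by
  set M : ℝ := ∫ u in Ioi (0:ℝ), Real.exp (-s*u) * k u with hMdef
  set F : ℝ → ℝ → ℝ := fun x t => if 0 < x ∧ x < t then Real.exp (-s*t) * (g x * k (t-x)) else 0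
    with hFdef
  clear_value M F
  -- measurability
  have hS : MeasurableSet {p : ℝ × ℝ | 0 < p.1 ∧ p.1 < p.2} :=
    (measurableSet_lt measurable_const measurable_fst).inter
      (measurableSet_lt measurable_fst measurable_snd)
  have hFm : Measurable (Function.uncurry F) := by
    have hrw : Function.uncurry F = Set.indicator {p : ℝ × ℝ | 0 < p.1 ∧ p.1 < p.2}
        (fun p => Real.exp (-s*p.2) * (g p.1 * k (p.2 - p.1))) := by
      funext p
      simp only [Function.uncurry, hFdef, Set.indicator_apply, mem_setOf_eq]
    rw [hrw]
    exact Measurable.indicator (by fun_prop) hS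
  -- the reference kernel function on the whole line
  set G0 : ℝ → ℝ := fun u => if 0 < u then Real.exp (-s*u) * k u else 0 with hG0def
  clear_value G0
  have hG0rw : G0 = Set.indicator (Ioi (0:ℝ)) (fun u => Real.exp (-s*u) * k u) := by
    funext u; by_cases h : 0 < u
    · rw [Set.indicator_of_mem (mem_Ioi.2 h)]; simp only [hG0def, if_pos h]
    · rw [Set.indicator_of_notMem (by rwa [mem_Ioi])]; simp only [hG0def, if_neg h]
  have hG0i : Integrable G0 := by
    rw [hG0rw]; exact (integrable_indicator_iff measurableSet_Ioi).2 hki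
  have hG0int : ∫ u, G0 u = M := by
    rw [hG0rw, integral_indicator measurableSet_Ioi, hMdef]
  -- key 1-d computation
  have key : ∀ x : ℝ, 0 < x → ∀ c : ℝ,
      Integrable (fun t => if x < t then Real.exp (-s*t) * (c * k (t-x)) else 0) ∧
      ∫ t, (if x < t then Real.exp (-s*t) * (c * k (t-x)) else 0)
        = Real.exp (-s*x) * (c * M) := by
    intro x hx c
    have heq : (fun t => if x < t then Real.exp (-s*t) * (c * k (t-x)) else 0)
        = fun t => (Real.exp (-s*x) * c) * G0 (t - x) := by
      funext t
      by_cases h : x < t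
      · have h' : 0 < t - x := by linarith
        simp only [if_pos h, hG0def, if_pos h']
        rw [show -s*t = -s*x + -s*(t-x) by ring, Real.exp_add]; ring
      · have h' : ¬ (0 < t - x) := fun hc => h (by linarith)
        simp only [if_neg h, hG0def, if_neg h', mul_zero]
    rw [heq]
    constructor
    · exact (hG0i.comp_sub_right x).const_mul _
    · rw [MeasureTheory.integral_const_mul, integral_sub_right_eq_self G0 x, hG0int]
      ring
  -- slices of F
  have hslice : ∀ x : ℝ, 0 < x →
      (fun t => F x t) = (fun t => if x < t then Real.exp (-s*t) * (g x * k (t-x)) else 0) := by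
    intro x hx; funext t
    by_cases h : x < t
    · simp only [hFdef, if_pos (And.intro hx h), if_pos h]
    · simp only [hFdef, h, and_false, if_false, if_neg h]
  have hslice0 : ∀ x : ℝ, ¬ (0 < x) → (fun t => F x t) = fun _ => (0:ℝ) := by
    intro x hx; funext t
    simp only [hFdef]
    rw [if_neg (fun hc => hx hc.1)]
  have hsliceNorm : ∀ x : ℝ, 0 < x →
      (fun t => ‖F x t‖) = (fun t => if x < t then Real.exp (-s*t) * (‖g x‖ * k (t-x)) else 0) := by
    intro x hx; funext t
    by_cases h : x < t
    · simp only [hFdef, if_pos (And.intro hx h), if_pos h]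
      have hk' : 0 ≤ k (t - x) := hk0 _ (by linarith)
      rw [norm_mul, norm_mul, Real.norm_eq_abs, abs_of_nonneg (Real.exp_nonneg _),
        Real.norm_eq_abs (k (t-x)), abs_of_nonneg hk', Real.norm_eq_abs]
    · simp only [hFdef, h, and_false, if_false, if_neg h, norm_zero]
  -- integrability on the product
  have hFint : Integrable (Function.uncurry F) (volume.prod volume) := by
    rw [integrable_prod_iff hFm.aestronglyMeasurable]
    constructor
    · apply ae_of_all
      intro x
      rcases lt_or_ge 0 x with hx | hx
      · rw [show (fun y => Function.uncurry F (x, y)) = fun t => F x t from rfl, hslice x hx]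
        exact (key x hx (g x)).1
      · rw [show (fun y => Function.uncurry F (x, y)) = fun t => F x t from rfl,
          hslice0 x (not_lt.2 hx)]
        exact integrable_zero _ _ _
    · have hrw : (fun x => ∫ t, ‖Function.uncurry F (x, t)‖)
          = fun x => if 0 < x then Real.exp (-s*x) * (‖g x‖ * M) else 0 := by
        funext x
        rcases lt_or_ge 0 x with hx | hx
        · rw [if_pos hx,
            show (fun t => ‖Function.uncurry F (x, t)‖) = fun t => ‖F x t‖ from rfl,
            hsliceNorm x hx, (key x hx ‖g x‖).2]
        · rw [if_neg (not_lt.2 hx)]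
          have h0 : ∀ t : ℝ, F x t = 0 := fun t => by
            simp only [hFdef]
            rw [if_neg (fun hc => absurd hc.1 (not_lt.2 hx))]
          have huc : (fun t => ‖Function.uncurry F (x, t)‖) = fun _ => (0:ℝ) := by
            funext t
            rw [show Function.uncurry F (x, t) = F x t from rfl, h0 t, norm_zero]
          rw [huc, integral_zero]
      rw [hrw]
      have hind : (fun x => if 0 < x then Real.exp (-s*x) * (‖g x‖ * M) else 0)
          = Set.indicator (Ioi (0:ℝ)) (fun x => Real.exp (-s*x) * (‖g x‖ * M)) := by
        funext x; by_cases h : 0 < x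
        · rw [Set.indicator_of_mem (mem_Ioi.2 h), if_pos h]
        · rw [Set.indicator_of_notMem (by rwa [mem_Ioi]), if_neg h]
      rw [hind, integrable_indicator_iff measurableSet_Ioi]
      have hM0 : 0 ≤ M := by
        rw [hMdef]
        apply setIntegral_nonneg measurableSet_Ioi
        intro u hu
        exact mul_nonneg (Real.exp_nonneg _) (hk0 u (le_of_lt (mem_Ioi.1 hu)))
      apply Integrable.mono ((hgi.norm.const_mul M))
      · exact (by fun_prop : Measurable fun x => Real.exp (-s*x) * (‖g x‖ * M)).aestronglyMeasurable
      · rw [ae_restrict_iff' measurableSet_Ioi]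
        apply ae_of_all
        intro x hx
        rw [mem_Ioi] at hx
        have h1 : Real.exp (-s*x) ≤ 1 := by
          rw [Real.exp_le_one_iff]
          nlinarith
        have h2 : 0 ≤ Real.exp (-s*x) := Real.exp_nonneg _
        simp only [Real.norm_eq_abs, abs_of_nonneg (Real.exp_nonneg (-s*x))]
        rw [abs_of_nonneg (by positivity : (0:ℝ) ≤ Real.exp (-s*x) * (|g x| * M)),
          abs_of_nonneg (by positivity : (0:ℝ) ≤ M * |g x|)]
        nlinarith [abs_nonneg (g x), mul_nonneg (abs_nonneg (g x)) hM0]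
  -- the swap
  have hswap := MeasureTheory.integral_integral_swap (f := F) hFint
  -- inner x-slices (fixed t)
  have hTslice : ∀ t : ℝ, 0 < t →
      ∫ x, F x t = Real.exp (-s*t) * ∫ x in (0:ℝ)..t, g x * k (t-x) := by
    intro t ht
    have hrw : (fun x => F x t)
        = Set.indicator (Ioo (0:ℝ) t) (fun x => Real.exp (-s*t) * (g x * k (t-x))) := by
      funext x
      by_cases h : 0 < x ∧ x < t
      · rw [Set.indicator_of_mem (by rwa [mem_Ioo])]; simp only [hFdef, if_pos h]
      · rw [Set.indicator_of_notMem (by rwa [mem_Ioo])]; simp only [hFdef, if_neg h]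
    rw [hrw, integral_indicator measurableSet_Ioo, MeasureTheory.integral_const_mul,
      ← integral_Ioc_eq_integral_Ioo, ← intervalIntegral.integral_of_le ht.le]
  have hTslice0 : ∀ t : ℝ, t ∉ Ioi (0:ℝ) → ∫ x, F x t = 0 := by
    intro t ht
    rw [mem_Ioi, not_lt] at ht
    have : (fun x => F x t) = fun _ => (0:ℝ) := by
      funext x
      simp only [hFdef]
      rw [if_neg (fun hc => absurd (lt_trans hc.1 hc.2) (not_lt.2 ht))]
    rw [this, integral_zero]
  -- outer x integral value
  have hXval : ∫ x, (∫ t, F x t) = M * ∫ x in Ioi (0:ℝ), Real.exp (-s*x) * g x := by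
    have hrw : (fun x => ∫ t, F x t)
        = Set.indicator (Ioi (0:ℝ)) (fun x => M * (Real.exp (-s*x) * g x)) := by
      funext x
      rcases lt_or_ge 0 x with hx | hx
      · rw [Set.indicator_of_mem (mem_Ioi.2 hx), hslice x hx, (key x hx (g x)).2]
        ring
      · rw [Set.indicator_of_notMem (by rw [mem_Ioi]; exact not_lt.2 hx),
          hslice0 x (not_lt.2 hx), integral_zero]
    rw [hrw, integral_indicator measurableSet_Ioi, MeasureTheory.integral_const_mul]
  constructor
  · have hint : Integrable (fun t => ∫ x, F x t) := by
      have := hFint.integral_prod_right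
      exact this
    apply (hint.integrableOn (s := Ioi 0)).congr_fun _ measurableSet_Ioi
    intro t ht
    exact hTslice t (mem_Ioi.1 ht)
  · calc ∫ t in Ioi (0:ℝ), Real.exp (-s*t) * ∫ x in (0:ℝ)..t, g x * k (t-x)
        = ∫ t in Ioi (0:ℝ), (∫ x, F x t) := by
          apply setIntegral_congr_fun measurableSet_Ioi
          intro t ht
          exact (hTslice t (mem_Ioi.1 ht)).symm
      _ = ∫ t, (∫ x, F x t) := setIntegral_eq_integral_of_forall_compl_eq_zero hTslice0
      _ = ∫ x, (∫ t, F x t) := hswap.symm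
      _ = M * ∫ x in Ioi (0:ℝ), Real.exp (-s*x) * g x := hXval

lemma exp_laplace_int {s : ℝ} (hs : 0 < s) :
    ∫ u in Ioi (0:ℝ), Real.exp (-s*u) = 1/s := by
  have h := laplace_rpow (s := s) (β := 0) hs le_rfl
  simp only [Real.rpow_zero, mul_one, Real.Gamma_one, Real.rpow_one, zero_add] at h
  exact h

lemma laplace_deriv {s : ℝ} (hs : 0 < s) (f : ℝ → ℝ) (hdiff : Differentiable ℝ f)
    (hf' : IntegrableOn (deriv f) (Ioi (0:ℝ)))
    (hlap : IntegrableOn (fun t => Real.exp (-s*t) * f t) (Ioi (0:ℝ))) :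
    ∫ x in Ioi (0:ℝ), Real.exp (-s*x) * deriv f x
      = s * (∫ t in Ioi (0:ℝ), Real.exp (-s*t) * f t) - f 0 := by
  have hki : IntegrableOn (fun u => Real.exp (-s*u) * (1:ℝ)) (Ioi (0:ℝ)) :=
    (exp_neg_integrableOn_Ioi 0 hs).congr_fun (fun u _ => (mul_one _).symm) measurableSet_Ioi
  have hconv := (conv_laplace hs (deriv f) (fun _ => (1:ℝ)) (measurable_deriv f) hf'
    measurable_const (fun _ _ => zero_le_one) hki).2
  have hC : ∫ u in Ioi (0:ℝ), Real.exp (-s*u) * (1:ℝ) = 1/s := by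
    rw [← exp_laplace_int hs]
    exact setIntegral_congr_fun measurableSet_Ioi (fun u _ => mul_one _)
  rw [hC] at hconv
  have hFTC : ∀ t : ℝ, 0 < t →
      Real.exp (-s*t) * ∫ x in (0:ℝ)..t, deriv f x * (1:ℝ)
        = Real.exp (-s*t) * f t - Real.exp (-s*t) * f 0 := by
    intro t ht
    have hii : IntervalIntegrable (deriv f) volume 0 t := by
      rw [intervalIntegrable_iff_integrableOn_Ioc_of_le ht.le]
      exact hf'.mono_set Ioc_subset_Ioi_self
    have := intervalIntegral.integral_eq_sub_of_hasDerivAt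
      (f := f) (f' := deriv f) (a := 0) (b := t)
      (fun x _ => (hdiff x).hasDerivAt) hii
    simp only [mul_one]
    rw [this]; ring
  have hI2 : IntegrableOn (fun t => Real.exp (-s*t) * f 0) (Ioi (0:ℝ)) :=
    (exp_neg_integrableOn_Ioi 0 hs).mul_const (f 0)
  have hlhs : ∫ t in Ioi (0:ℝ), Real.exp (-s*t) * ∫ x in (0:ℝ)..t, deriv f x * (1:ℝ)
      = (∫ t in Ioi (0:ℝ), Real.exp (-s*t) * f t) - f 0 * (1/s) := by
    rw [setIntegral_congr_fun measurableSet_Ioi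
      (fun t ht => hFTC t (mem_Ioi.1 ht)), integral_sub hlap hI2]
    congr 1
    rw [show (fun t => Real.exp (-s*t) * f 0) = fun t => f 0 * Real.exp (-s*t) from
      funext fun t => mul_comm _ _, MeasureTheory.integral_const_mul, exp_laplace_int hs]
  rw [hlhs] at hconv
  have hs' : s ≠ 0 := hs.ne'
  field_simp at hconv ⊢
  linarith

set_option maxHeartbeats 2000000 in
/-- Laplace transform of the ABC derivative. -/
theorem laplace_ABC (α B s : ℝ) (f : ℝ → ℝ)
    (hα0 : 0 < α) (hα1 : α < 1) (hB : 0 < B) (hs : 0 < s)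
    (hdiff : Differentiable ℝ f)
    (hf' : IntegrableOn (deriv f) (Set.Ioi (0:ℝ)))
    (hlap : IntegrableOn (fun t => Real.exp (-s * t) * f t) (Set.Ioi (0:ℝ)))
    (hconv : α / (1 - α) < s ^ α) :
    laplace (ABC B 0 α f) s
      = (B / (1 - α)) * (s ^ (α - 1) / (s ^ α + α / (1 - α)))
          * (s * laplace f s - f 0) := by
  have h1α : (0:ℝ) < 1 - α := by linarith
  set lam : ℝ := α / (1 - α) with hlam
  clear_value lam
  have hlam0 : 0 ≤ lam := by rw [hlam]; positivity
  have hsα : (0:ℝ) < s ^ α := Real.rpow_pos_of_pos hs α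
  have hratio : lam / s ^ α < 1 := (div_lt_one hsα).2 hconv
  have hratio0 : 0 ≤ lam / s ^ α := by positivity
  have hαn0 : ∀ n : ℕ, 0 ≤ α * (n:ℝ) := fun n => by positivity
  -- conv_laplace for each power kernel, with g = deriv f and g = ‖deriv f‖
  have hconvn := fun n : ℕ => conv_laplace hs (deriv f) (fun u => u ^ (α*(n:ℝ)))
    (measurable_deriv f) hf' (by fun_prop) (fun u hu => Real.rpow_nonneg hu _)
    (integrable_laplace_rpow hs (hαn0 n))
  have habs := fun n : ℕ => conv_laplace hs (fun x => ‖deriv f x‖) (fun u => u ^ (α*(n:ℝ)))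
    (measurable_deriv f).norm hf'.norm (by fun_prop) (fun u hu => Real.rpow_nonneg hu _)
    (integrable_laplace_rpow hs (hαn0 n))
  have hM : ∀ n : ℕ, ∫ u in Ioi (0:ℝ), Real.exp (-s*u) * u ^ (α*(n:ℝ))
      = Real.Gamma (α*(n:ℝ)+1) / s ^ (α*(n:ℝ)+1) := fun n => laplace_rpow hs (hαn0 n)
  have hpow : ∀ n : ℕ, s ^ (α*(n:ℝ)+1) = (s^α)^n * s := fun n => by
    rw [Real.rpow_add hs, Real.rpow_one, ← Real.rpow_natCast (s^α) n, ← Real.rpow_mul hs.le]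
  have hΓpos : ∀ n : ℕ, 0 < Real.Gamma (α*(n:ℝ)+1) := fun n =>
    Real.Gamma_pos_of_pos (by positivity)
  -- Step 1 : unfold
  have step1 : laplace (ABC B 0 α f) s
      = (B/(1-α)) * ∫ t in Ioi (0:ℝ), Real.exp (-s*t) *
          ∫ x in (0:ℝ)..t, deriv f x * mittagLeffler α (-lam * (t-x)^α) := by
    simp only [laplace, ABC, neg_div, ← hlam]
    rw [← MeasureTheory.integral_const_mul]
    exact setIntegral_congr_fun measurableSet_Ioi (fun t _ => by ring)
  -- Step 2 : pointwise series expansion of the inner integral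
  have step2 : ∀ t ∈ Ioi (0:ℝ), Real.exp (-s*t) *
      (∫ x in (0:ℝ)..t, deriv f x * mittagLeffler α (-lam * (t-x)^α))
      = ∑' n : ℕ, ((-lam)^n / Real.Gamma (α*(n:ℝ)+1)) *
          (Real.exp (-s*t) * ∫ x in (0:ℝ)..t, deriv f x * (t-x)^(α*(n:ℝ))) := by
    intro t ht; rw [mem_Ioi] at ht
    have hml : ∀ x ∈ Ioc (0:ℝ) t, deriv f x * mittagLeffler α (-lam * (t-x)^α)
        = ∑' n : ℕ, deriv f x * (((-lam)^n / Real.Gamma (α*(n:ℝ)+1)) * (t-x)^(α*(n:ℝ))) := by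
      intro x hx
      have hxt : (0:ℝ) ≤ t - x := by linarith [hx.2]
      rw [mittagLeffler, ← tsum_mul_left]
      apply tsum_congr; intro n
      rw [mul_pow, ← Real.rpow_natCast ((t-x)^α) n, ← Real.rpow_mul hxt]
      ring
    have hsum := summable_ml α (lam * t^α) hα0 (by positivity)
    have hInorm : ∫⁻ x in Ioc (0:ℝ) t, ‖deriv f x‖₊ ∂volume < ⊤ :=
      (hf'.mono_set Ioc_subset_Ioi_self).2
    have hcond : ∑' n : ℕ, ∫⁻ x in Ioc (0:ℝ) t,
        ‖deriv f x * (((-lam)^n / Real.Gamma (α*(n:ℝ)+1)) * (t-x)^(α*(n:ℝ)))‖₊ ∂volume ≠ ⊤ := by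
      have hbound : ∀ n : ℕ, ∫⁻ x in Ioc (0:ℝ) t,
          ‖deriv f x * (((-lam)^n / Real.Gamma (α*(n:ℝ)+1)) * (t-x)^(α*(n:ℝ)))‖₊ ∂volume
          ≤ ENNReal.ofReal ((lam * t^α)^n / Real.Gamma (α*(n:ℝ)+1))
              * ∫⁻ x in Ioc (0:ℝ) t, ‖deriv f x‖₊ ∂volume := by
        intro n
        rw [← MeasureTheory.lintegral_const_mul' _ _ ENNReal.ofReal_ne_top]
        apply lintegral_mono_ae
        rw [ae_restrict_iff' measurableSet_Ioc]
        apply ae_of_all; intro x hx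
        have h0 : (0:ℝ) ≤ t - x := by linarith [hx.2]
        have h1 : t - x ≤ t := by linarith [hx.1]
        calc (‖deriv f x * (((-lam)^n / Real.Gamma (α*(n:ℝ)+1)) * (t-x)^(α*(n:ℝ)))‖₊ : ℝ≥0∞)
            = ENNReal.ofReal (|((-lam)^n / Real.Gamma (α*(n:ℝ)+1)) * (t-x)^(α*(n:ℝ))|
                * ‖deriv f x‖) := by
              rw [← enorm_eq_nnnorm, ← ofReal_norm, norm_mul, mul_comm, Real.norm_eq_abs
                (((-lam)^n / Real.Gamma (α*(n:ℝ)+1)) * (t-x)^(α*(n:ℝ)))]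
          _ ≤ ENNReal.ofReal ((lam * t^α)^n / Real.Gamma (α*(n:ℝ)+1) * ‖deriv f x‖) := by
              apply ENNReal.ofReal_le_ofReal
              apply mul_le_mul_of_nonneg_right _ (norm_nonneg _)
              rw [abs_mul, abs_div, abs_pow, abs_neg, abs_of_nonneg hlam0,
                abs_of_nonneg (hΓpos n).le, abs_of_nonneg (Real.rpow_nonneg h0 _),
                mul_pow, div_mul_eq_mul_div]
              have hle : (t-x)^(α*(n:ℝ)) ≤ (t^α)^n := by
                rw [← Real.rpow_natCast (t^α) n, ← Real.rpow_mul ht.le]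
                exact Real.rpow_le_rpow h0 h1 (hαn0 n)
              gcongr
          _ = ENNReal.ofReal ((lam * t^α)^n / Real.Gamma (α*(n:ℝ)+1)) * ↑‖deriv f x‖₊ := by
              rw [ENNReal.ofReal_mul (by positivity), ofReal_norm, enorm_eq_nnnorm]
      refine ne_top_of_le_ne_top ?_ (ENNReal.tsum_le_tsum hbound)
      rw [ENNReal.tsum_mul_right]
      refine ENNReal.mul_ne_top ?_ hInorm.ne
      rw [← ENNReal.ofReal_tsum_of_nonneg (fun n => by positivity) hsum]
      exact ENNReal.ofReal_ne_top
    have hswap : ∫ x in Ioc (0:ℝ) t, deriv f x * mittagLeffler α (-lam * (t-x)^α)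
        = ∑' n : ℕ, ∫ x in Ioc (0:ℝ) t,
            deriv f x * (((-lam)^n / Real.Gamma (α*(n:ℝ)+1)) * (t-x)^(α*(n:ℝ))) := by
      rw [setIntegral_congr_fun measurableSet_Ioc hml]
      exact integral_tsum
        (fun n => ((measurable_deriv f).mul (by fun_prop)).aestronglyMeasurable) hcond
    rw [intervalIntegral.integral_of_le ht.le, hswap, ← tsum_mul_left]
    apply tsum_congr; intro n
    have hpull : ∫ x in Ioc (0:ℝ) t,
        deriv f x * (((-lam)^n / Real.Gamma (α*(n:ℝ)+1)) * (t-x)^(α*(n:ℝ)))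
        = ((-lam)^n / Real.Gamma (α*(n:ℝ)+1)) * ∫ x in Ioc (0:ℝ) t,
            deriv f x * (t-x)^(α*(n:ℝ)) := by
      rw [← MeasureTheory.integral_const_mul]
      exact setIntegral_congr_fun measurableSet_Ioc (fun x _ => by ring)
    rw [intervalIntegral.integral_of_le ht.le, hpull]
    ring
  -- Step 3 : interchange of sum and Laplace integral
  have hGint : ∀ n : ℕ, IntegrableOn (fun t => ((-lam)^n / Real.Gamma (α*(n:ℝ)+1)) *
      (Real.exp (-s*t) * ∫ x in (0:ℝ)..t, deriv f x * (t-x)^(α*(n:ℝ)))) (Ioi (0:ℝ)) :=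
    fun n => ((hconvn n).1.const_mul _)
  have hDpos : 0 ≤ ∫ x in Ioi (0:ℝ), Real.exp (-s*x) * ‖deriv f x‖ := by
    apply setIntegral_nonneg measurableSet_Ioi
    intro x _; positivity
  have houtcond : ∑' n : ℕ, ∫⁻ t in Ioi (0:ℝ),
      ‖((-lam)^n / Real.Gamma (α*(n:ℝ)+1)) *
        (Real.exp (-s*t) * ∫ x in (0:ℝ)..t, deriv f x * (t-x)^(α*(n:ℝ)))‖₊ ∂volume ≠ ⊤ := by
    have hb : ∀ n : ℕ, ∫⁻ t in Ioi (0:ℝ),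
        ‖((-lam)^n / Real.Gamma (α*(n:ℝ)+1)) *
          (Real.exp (-s*t) * ∫ x in (0:ℝ)..t, deriv f x * (t-x)^(α*(n:ℝ)))‖₊ ∂volume
        ≤ ENNReal.ofReal ((lam/s^α)^n *
            ((∫ x in Ioi (0:ℝ), Real.exp (-s*x) * ‖deriv f x‖) / s)) := by
      intro n
      have hint : IntegrableOn (fun t => (lam^n / Real.Gamma (α*(n:ℝ)+1)) *
          (Real.exp (-s*t) * ∫ x in (0:ℝ)..t, ‖deriv f x‖ * (t-x)^(α*(n:ℝ)))) (Ioi (0:ℝ)) :=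
        (habs n).1.const_mul _
      have hnn : ∀ t ∈ Ioi (0:ℝ), 0 ≤ (lam^n / Real.Gamma (α*(n:ℝ)+1)) *
          (Real.exp (-s*t) * ∫ x in (0:ℝ)..t, ‖deriv f x‖ * (t-x)^(α*(n:ℝ))) := by
        intro t ht; rw [mem_Ioi] at ht
        have : 0 ≤ ∫ x in (0:ℝ)..t, ‖deriv f x‖ * (t-x)^(α*(n:ℝ)) := by
          apply intervalIntegral.integral_nonneg ht.le
          intro x hx
          exact mul_nonneg (norm_nonneg _) (Real.rpow_nonneg (by linarith [hx.2]) _)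
        positivity
      have hptw : ∀ t ∈ Ioi (0:ℝ),
          ‖((-lam)^n / Real.Gamma (α*(n:ℝ)+1)) *
            (Real.exp (-s*t) * ∫ x in (0:ℝ)..t, deriv f x * (t-x)^(α*(n:ℝ)))‖
          ≤ (lam^n / Real.Gamma (α*(n:ℝ)+1)) *
            (Real.exp (-s*t) * ∫ x in (0:ℝ)..t, ‖deriv f x‖ * (t-x)^(α*(n:ℝ))) := by
        intro t ht; rw [mem_Ioi] at ht
        rw [norm_mul, norm_mul, Real.norm_eq_abs ((-lam)^n / Real.Gamma (α*(n:ℝ)+1)),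
          abs_div, abs_pow, abs_neg, abs_of_nonneg hlam0, abs_of_nonneg (hΓpos n).le,
          Real.norm_eq_abs (Real.exp _), abs_of_nonneg (Real.exp_nonneg _)]
        apply mul_le_mul_of_nonneg_left _ (by positivity)
        apply mul_le_mul_of_nonneg_left _ (Real.exp_nonneg _)
        rw [Real.norm_eq_abs]
        calc |∫ x in (0:ℝ)..t, deriv f x * (t-x)^(α*(n:ℝ))|
            ≤ ∫ x in (0:ℝ)..t, |deriv f x * (t-x)^(α*(n:ℝ))| :=
              intervalIntegral.abs_integral_le_integral_abs ht.le
          _ = ∫ x in (0:ℝ)..t, ‖deriv f x‖ * (t-x)^(α*(n:ℝ)) := by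
              apply intervalIntegral.integral_congr
              intro x hx
              rw [uIcc_of_le ht.le] at hx
              have h2 : (0:ℝ) ≤ t - x := by linarith [hx.2]
              dsimp only
              rw [abs_mul, abs_of_nonneg (Real.rpow_nonneg h2 _), Real.norm_eq_abs]
      calc ∫⁻ t in Ioi (0:ℝ), ‖((-lam)^n / Real.Gamma (α*(n:ℝ)+1)) *
            (Real.exp (-s*t) * ∫ x in (0:ℝ)..t, deriv f x * (t-x)^(α*(n:ℝ)))‖₊ ∂volume
          ≤ ∫⁻ t in Ioi (0:ℝ), ENNReal.ofReal ((lam^n / Real.Gamma (α*(n:ℝ)+1)) *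
            (Real.exp (-s*t) * ∫ x in (0:ℝ)..t, ‖deriv f x‖ * (t-x)^(α*(n:ℝ)))) ∂volume := by
            apply lintegral_mono_ae
            rw [ae_restrict_iff' measurableSet_Ioi]
            apply ae_of_all; intro t ht
            rw [← enorm_eq_nnnorm, ← ofReal_norm]
            exact ENNReal.ofReal_le_ofReal (hptw t ht)
        _ = ENNReal.ofReal (∫ t in Ioi (0:ℝ), (lam^n / Real.Gamma (α*(n:ℝ)+1)) *
            (Real.exp (-s*t) * ∫ x in (0:ℝ)..t, ‖deriv f x‖ * (t-x)^(α*(n:ℝ)))) := by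
            rw [ofReal_integral_eq_lintegral_ofReal hint
              ((ae_restrict_iff' measurableSet_Ioi).2 (ae_of_all _ hnn))]
        _ = ENNReal.ofReal ((lam/s^α)^n *
            ((∫ x in Ioi (0:ℝ), Real.exp (-s*x) * ‖deriv f x‖) / s)) := by
            rw [MeasureTheory.integral_const_mul, (habs n).2, hM n]
            congr 1
            rw [hpow n, div_pow]
            have h1 := (hΓpos n).ne'
            have h2 := hsα.ne'
            have h3 := hs.ne'
            field_simp
    refine ne_top_of_le_ne_top ?_ (ENNReal.tsum_le_tsum hb)
    rw [← ENNReal.ofReal_tsum_of_nonneg (fun n => by positivity)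
      ((summable_geometric_of_lt_one hratio0 hratio).mul_right _)]
    exact ENNReal.ofReal_ne_top
  -- Step 4 : put everything together
  have hgeo : ∑' n : ℕ, (-(lam/s^α))^n = (1 + lam/s^α)⁻¹ := by
    have hnorm : ‖(-(lam/s^α) : ℝ)‖ < 1 := by
      rw [norm_neg, Real.norm_eq_abs, abs_of_nonneg hratio0]
      exact hratio
    rw [tsum_geometric_of_norm_lt_one hnorm, sub_neg_eq_add]
  have hL' := laplace_deriv hs f hdiff hf' hlap
  calc laplace (ABC B 0 α f) s
      = (B/(1-α)) * ∫ t in Ioi (0:ℝ), Real.exp (-s*t) *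
          ∫ x in (0:ℝ)..t, deriv f x * mittagLeffler α (-lam * (t-x)^α) := step1
    _ = (B/(1-α)) * ∫ t in Ioi (0:ℝ), ∑' n : ℕ, ((-lam)^n / Real.Gamma (α*(n:ℝ)+1)) *
          (Real.exp (-s*t) * ∫ x in (0:ℝ)..t, deriv f x * (t-x)^(α*(n:ℝ))) := by
        rw [setIntegral_congr_fun measurableSet_Ioi step2]
    _ = (B/(1-α)) * ∑' n : ℕ, ∫ t in Ioi (0:ℝ), ((-lam)^n / Real.Gamma (α*(n:ℝ)+1)) *
          (Real.exp (-s*t) * ∫ x in (0:ℝ)..t, deriv f x * (t-x)^(α*(n:ℝ))) := by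
        rw [integral_tsum (fun n => (hGint n).aestronglyMeasurable) houtcond]
    _ = (B/(1-α)) * ∑' n : ℕ, (-(lam/s^α))^n *
          ((∫ x in Ioi (0:ℝ), Real.exp (-s*x) * deriv f x) / s) := by
        congr 1
        apply tsum_congr; intro n
        rw [MeasureTheory.integral_const_mul, (hconvn n).2, hM n, hpow n]
        have h1 := (hΓpos n).ne'
        have h2 := hsα.ne'
        have h3 := hs.ne'
        rw [show ((-(lam/s^α)):ℝ)^n = (-lam)^n/(s^α)^n by rw [← neg_div, div_pow]]
        field_simp
    _ = (B/(1-α)) * ((1 + lam/s^α)⁻¹ *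
          ((∫ x in Ioi (0:ℝ), Real.exp (-s*x) * deriv f x) / s)) := by
        rw [tsum_mul_right, hgeo]
    _ = (B / (1 - α)) * (s ^ (α - 1) / (s ^ α + lam)) * (s * laplace f s - f 0) := by
        rw [hL', laplace]
        have hsm1 : s ^ (α-1) = s^α / s := by
          rw [Real.rpow_sub hs, Real.rpow_one]
        rw [hsm1]
        have hden : (0:ℝ) < s^α + lam := by positivity
        have h2 := hsα.ne'
        have h3 := hs.ne'
        field_simp
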